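/- (General Q(λ) operator rewriting.) For policies π and μ, λ ∈ [0,1), and any Q-function Q, (1−λ) ∑_{n≥0} λ^n [ ∑_{t=0}^{n} γ^t (P^μ)^t r + γ^{n+1} (P^μ)^n P^π Q ] = ∑_{t≥0} (λγ)^t (P^μ)^t [ r + (1−λ) γ P^π Q ], where all series converge. -/

import Mathlib

open scoped BigOperators

noncomputable section

/-- The operator `P^π` on Q-functions. -/
def Pop {X A : Type*} [Fintype X] [Fintype A] (P : X → A → X → ℝ) (π : X → A → ℝ)
    (Q : X × A → ℝ) : X × A → ℝ :=
  fun p => ∑ y : X, ∑ b : A, P p.1 p.2 y * π y b * Q (y, b)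

section PopAux

variable {X A : Type*} [Fintype X] [Fintype A]

lemma Pop_add (P : X → A → X → ℝ) (μ : X → A → ℝ) (f g : X × A → ℝ) :
    Pop P μ (f + g) = Pop P μ f + Pop P μ g := by
  funext p
  simp only [Pop, Pi.add_apply, mul_add, Finset.sum_add_distrib]

lemma Pop_smul (P : X → A → X → ℝ) (μ : X → A → ℝ) (c : ℝ) (f : X × A → ℝ) :
    Pop P μ (c • f) = c • Pop P μ f := by
  funext p
  simp only [Pop, Pi.smul_apply, smul_eq_mul, Finset.mul_sum]
  exact Finset.sum_congr rfl fun y _ => Finset.sum_congr rfl fun b _ => by ring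

lemma Pop_iter_add (P : X → A → X → ℝ) (μ : X → A → ℝ) (t : ℕ) (f g : X × A → ℝ) :
    (Pop P μ)^[t] (f + g) = (Pop P μ)^[t] f + (Pop P μ)^[t] g := by
  induction t generalizing f g with
  | zero => simp
  | succ t ih =>
    simp only [Function.iterate_succ_apply, Pop_add, ih]

lemma Pop_iter_smul (P : X → A → X → ℝ) (μ : X → A → ℝ) (t : ℕ) (c : ℝ) (f : X × A → ℝ) :
    (Pop P μ)^[t] (c • f) = c • (Pop P μ)^[t] f := by
  induction t generalizing f with
  | zero => simp
  | succ t ih =>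
    simp only [Function.iterate_succ_apply, Pop_smul, ih]

lemma Pop_norm_le (P : X → A → X → ℝ)
    (hP0 : ∀ x a y, 0 ≤ P x a y) (hP1 : ∀ x a, ∑ y : X, P x a y = 1)
    (μ : X → A → ℝ)
    (hμ0 : ∀ x a, 0 ≤ μ x a) (hμ1 : ∀ x, ∑ a : A, μ x a = 1)
    (f : X × A → ℝ) : ‖Pop P μ f‖ ≤ ‖f‖ := by
  rw [pi_norm_le_iff_of_nonneg (norm_nonneg f)]
  intro p
  rw [Real.norm_eq_abs]
  have habs : |Pop P μ f p| ≤ ∑ y : X, ∑ b : A, P p.1 p.2 y * μ y b * ‖f‖ := by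
    refine (Finset.abs_sum_le_sum_abs _ _).trans ?_
    refine Finset.sum_le_sum fun y _ => ?_
    refine (Finset.abs_sum_le_sum_abs _ _).trans ?_
    refine Finset.sum_le_sum fun b _ => ?_
    rw [abs_mul, abs_mul, abs_of_nonneg (hP0 _ _ _), abs_of_nonneg (hμ0 _ _)]
    have := norm_le_pi_norm f (y, b)
    rw [Real.norm_eq_abs] at this
    exact mul_le_mul_of_nonneg_left this (mul_nonneg (hP0 _ _ _) (hμ0 _ _))
  refine habs.trans_eq ?_
  have hy : ∀ y : X, ∑ b : A, P p.1 p.2 y * μ y b * ‖f‖ = P p.1 p.2 y * ‖f‖ := by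
    intro y
    calc ∑ b : A, P p.1 p.2 y * μ y b * ‖f‖
        = (P p.1 p.2 y * ‖f‖) * ∑ b : A, μ y b := by
          rw [Finset.mul_sum]
          exact Finset.sum_congr rfl fun b _ => by ring
      _ = P p.1 p.2 y * ‖f‖ := by rw [hμ1, mul_one]
  calc ∑ y : X, ∑ b : A, P p.1 p.2 y * μ y b * ‖f‖
      = ∑ y : X, P p.1 p.2 y * ‖f‖ := Finset.sum_congr rfl fun y _ => hy y
    _ = (∑ y : X, P p.1 p.2 y) * ‖f‖ := (Finset.sum_mul _ _ _).symm
    _ = ‖f‖ := by rw [hP1, one_mul]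

lemma Pop_iter_norm_le (P : X → A → X → ℝ)
    (hP0 : ∀ x a y, 0 ≤ P x a y) (hP1 : ∀ x a, ∑ y : X, P x a y = 1)
    (μ : X → A → ℝ)
    (hμ0 : ∀ x a, 0 ≤ μ x a) (hμ1 : ∀ x, ∑ a : A, μ x a = 1)
    (t : ℕ) (f : X × A → ℝ) : ‖(Pop P μ)^[t] f‖ ≤ ‖f‖ := by
  induction t generalizing f with
  | zero => simp
  | succ t ih =>
    rw [Function.iterate_succ_apply]
    exact (ih _).trans (Pop_norm_le P hP0 hP1 μ hμ0 hμ1 f)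

end PopAux

/-- General Q(λ) operator rewriting:
`(1−λ) ∑_{n≥0} λ^n [ ∑_{t=0}^{n} γ^t (P^μ)^t r + γ^{n+1} (P^μ)^n P^π Q ]
  = ∑_{t≥0} (λγ)^t (P^μ)^t [ r + (1−λ) γ P^π Q ]`, all series converging. -/
theorem stmt15 {X A : Type*} [Fintype X] [Fintype A] [Nonempty X] [Nonempty A]
    (P : X → A → X → ℝ)
    (hP0 : ∀ x a y, 0 ≤ P x a y) (hP1 : ∀ x a, ∑ y : X, P x a y = 1)
    (π μ : X → A → ℝ)
    (hπ0 : ∀ x a, 0 ≤ π x a) (hπ1 : ∀ x, ∑ a : A, π x a = 1)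
    (hμ0 : ∀ x a, 0 ≤ μ x a) (hμ1 : ∀ x, ∑ a : A, μ x a = 1)
    (γ : ℝ) (hγ0 : 0 ≤ γ) (hγ1 : γ < 1)
    (lam : ℝ) (hl0 : 0 ≤ lam) (hl1 : lam < 1)
    (r : X × A → ℝ) (Q : X × A → ℝ) :
    Summable (fun n : ℕ => ((1 - lam) * lam ^ n) •
      (∑ t ∈ Finset.range (n + 1), γ ^ t • (Pop P μ)^[t] r
        + γ ^ (n + 1) • (Pop P μ)^[n] (Pop P π Q))) ∧
    Summable (fun t : ℕ => (lam * γ) ^ t •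
      (Pop P μ)^[t] (r + ((1 - lam) * γ) • Pop P π Q)) ∧
    ∑' n : ℕ, ((1 - lam) * lam ^ n) •
        (∑ t ∈ Finset.range (n + 1), γ ^ t • (Pop P μ)^[t] r
          + γ ^ (n + 1) • (Pop P μ)^[n] (Pop P π Q)) =
      ∑' t : ℕ, (lam * γ) ^ t • (Pop P μ)^[t] (r + ((1 - lam) * γ) • Pop P π Q) := by
  classical
  have hSnorm : ∀ (t : ℕ) (f : X × A → ℝ), ‖(Pop P μ)^[t] f‖ ≤ ‖f‖ :=
    fun t f => Pop_iter_norm_le P hP0 hP1 μ hμ0 hμ1 t f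
  have hlm : (0:ℝ) ≤ 1 - lam := by linarith
  have hlm' : (1:ℝ) - lam ≠ 0 := by intro h; nlinarith
  have hlg0 : (0:ℝ) ≤ lam * γ := mul_nonneg hl0 hγ0
  have hlg1 : lam * γ < 1 :=
    lt_of_le_of_lt (mul_le_of_le_one_left hγ0 hl1.le) hγ1
  -- the building blocks
  set Pq : X × A → ℝ := Pop P π Q with hPqdef
  set u : ℕ → X × A → ℝ :=
    fun n => ∑ t ∈ Finset.range (n + 1), ((1 - lam) * lam ^ n * γ ^ t) • (Pop P μ)^[t] r
    with hudef
  set v : ℕ → X × A → ℝ :=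
    fun n => ((1 - lam) * γ * (lam * γ) ^ n) • (Pop P μ)^[n] Pq with hvdef
  set w : ℕ → X × A → ℝ := fun t => (lam * γ) ^ t • (Pop P μ)^[t] r with hwdef
  -- decomposition of the left-hand side terms
  have ha : (fun n : ℕ => ((1 - lam) * lam ^ n) •
      (∑ t ∈ Finset.range (n + 1), γ ^ t • (Pop P μ)^[t] r
        + γ ^ (n + 1) • (Pop P μ)^[n] Pq)) = fun n => u n + v n := by
    funext n
    rw [smul_add, Finset.smul_sum]
    congr 1
    · exact Finset.sum_congr rfl fun t _ => by rw [smul_smul]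
    · rw [smul_smul, hvdef]
      congr 1
      rw [mul_pow]
      ring
  -- decomposition of the right-hand side terms
  have hb : (fun t : ℕ => (lam * γ) ^ t •
      (Pop P μ)^[t] (r + ((1 - lam) * γ) • Pq)) = fun t => w t + v t := by
    funext t
    rw [Pop_iter_add, Pop_iter_smul, smul_add, smul_smul]
    congr 2
    ring
  -- basic geometric summabilities
  have hlamsum : Summable fun n : ℕ => lam ^ n := summable_geometric_of_lt_one hl0 hl1
  have hγsum : Summable fun t : ℕ => γ ^ t := summable_geometric_of_lt_one hγ0 hγ1
  have hlgsum : Summable fun t : ℕ => (lam * γ) ^ t := summable_geometric_of_lt_one hlg0 hlg1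
  have hγts : ∀ n : ℕ, ∑ t ∈ Finset.range (n + 1), γ ^ t ≤ (1 - γ)⁻¹ := by
    intro n
    have := Summable.sum_le_tsum (Finset.range (n + 1)) (fun t _ => pow_nonneg hγ0 t) hγsum
    rwa [tsum_geometric_of_lt_one hγ0 hγ1] at this
  -- summability of u
  have hu : Summable u := by
    refine Summable.of_norm_bounded
      (g := fun n => ((1 - lam) * ‖r‖ * (1 - γ)⁻¹) * lam ^ n) (hlamsum.mul_left _) ?_
    intro n
    calc ‖u n‖ ≤ ∑ t ∈ Finset.range (n + 1),
          ‖((1 - lam) * lam ^ n * γ ^ t) • (Pop P μ)^[t] r‖ := norm_sum_le _ _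
      _ ≤ ∑ t ∈ Finset.range (n + 1), (1 - lam) * lam ^ n * γ ^ t * ‖r‖ := by
          refine Finset.sum_le_sum fun t _ => ?_
          rw [norm_smul, Real.norm_eq_abs,
            abs_of_nonneg (by positivity : (0:ℝ) ≤ (1 - lam) * lam ^ n * γ ^ t)]
          exact mul_le_mul_of_nonneg_left (hSnorm t r) (by positivity)
      _ = ((1 - lam) * lam ^ n * ‖r‖) * ∑ t ∈ Finset.range (n + 1), γ ^ t := by
          rw [Finset.mul_sum]
          exact Finset.sum_congr rfl fun t _ => by ring
      _ ≤ ((1 - lam) * lam ^ n * ‖r‖) * (1 - γ)⁻¹ :=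
          mul_le_mul_of_nonneg_left (hγts n) (by positivity)
      _ = ((1 - lam) * ‖r‖ * (1 - γ)⁻¹) * lam ^ n := by ring
  -- summability of v
  have hv : Summable v := by
    refine Summable.of_norm_bounded
      (g := fun n => ((1 - lam) * γ * ‖Pq‖) * (lam * γ) ^ n) (hlgsum.mul_left _) ?_
    intro n
    rw [hvdef, norm_smul, Real.norm_eq_abs,
      abs_of_nonneg (by positivity : (0:ℝ) ≤ (1 - lam) * γ * (lam * γ) ^ n)]
    calc (1 - lam) * γ * (lam * γ) ^ n * ‖(Pop P μ)^[n] Pq‖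
        ≤ (1 - lam) * γ * (lam * γ) ^ n * ‖Pq‖ :=
          mul_le_mul_of_nonneg_left (hSnorm n Pq) (by positivity)
      _ = ((1 - lam) * γ * ‖Pq‖) * (lam * γ) ^ n := by ring
  -- summability of w
  have hw : Summable w := by
    refine Summable.of_norm_bounded (g := fun t => ‖r‖ * (lam * γ) ^ t) (hlgsum.mul_left _) ?_
    intro t
    rw [hwdef, norm_smul, Real.norm_eq_abs,
      abs_of_nonneg (by positivity : (0:ℝ) ≤ (lam * γ) ^ t)]
    calc (lam * γ) ^ t * ‖(Pop P μ)^[t] r‖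
        ≤ (lam * γ) ^ t * ‖r‖ := mul_le_mul_of_nonneg_left (hSnorm t r) (by positivity)
      _ = ‖r‖ * (lam * γ) ^ t := by ring
  -- double-indexed family for the sum exchange
  set F : ℕ × ℕ → X × A → ℝ :=
    fun p => (((1 - lam) * γ ^ p.2) * (if p.2 ≤ p.1 then lam ^ p.1 else 0)) •
      (Pop P μ)^[p.2] r with hFdef
  have hFs : Summable F := by
    refine Summable.of_norm_bounded
      (g := fun p : ℕ × ℕ => ((1 - lam) * ‖r‖) * (lam ^ p.1 * γ ^ p.2)) ?_ ?_
    · exact Summable.mul_left _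
        (hlamsum.mul_of_nonneg hγsum (fun n => pow_nonneg hl0 n) (fun t => pow_nonneg hγ0 t))
    · rintro ⟨n, t⟩
      by_cases h : t ≤ n
      · rw [hFdef]
        simp only [if_pos h]
        rw [norm_smul, Real.norm_eq_abs,
          abs_of_nonneg (by positivity : (0:ℝ) ≤ (1 - lam) * γ ^ t * lam ^ n)]
        calc (1 - lam) * γ ^ t * lam ^ n * ‖(Pop P μ)^[t] r‖
            ≤ (1 - lam) * γ ^ t * lam ^ n * ‖r‖ :=
              mul_le_mul_of_nonneg_left (hSnorm t r) (by positivity)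
          _ = (1 - lam) * ‖r‖ * (lam ^ n * γ ^ t) := by ring
      · rw [hFdef]
        simp only [if_neg h]
        rw [mul_zero, zero_smul, norm_zero]
        positivity
  -- rows of F give u
  have hrow : ∀ n : ℕ, ∑' t : ℕ, F (n, t) = u n := by
    intro n
    rw [tsum_eq_sum (s := Finset.range (n + 1))
      (fun t ht => by
        rw [hFdef]
        have h : ¬ t ≤ n := by simpa [Nat.lt_succ_iff] using ht
        simp [h])]
    refine Finset.sum_congr rfl fun t ht => ?_
    have h : t ≤ n := by simpa [Nat.lt_succ_iff] using ht
    rw [hFdef]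
    simp only [if_pos h]
    congr 1
    ring
  -- columns of F give w
  have hφs : ∀ t : ℕ, Summable fun n : ℕ => (if t ≤ n then lam ^ n else 0) := by
    intro t
    refine hlamsum.of_nonneg_of_le (fun n => ?_) (fun n => ?_)
    · by_cases h : t ≤ n <;> simp [h, pow_nonneg hl0]
    · by_cases h : t ≤ n <;> simp [h, pow_nonneg hl0]
  have hφtsum : ∀ t : ℕ, ∑' n : ℕ, (if t ≤ n then lam ^ n else 0) = lam ^ t * (1 - lam)⁻¹ := by
    intro t
    have hkey := Summable.sum_add_tsum_nat_add (f := fun n : ℕ => (if t ≤ n then lam ^ n else 0)) t (hφs t)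
    rw [← hkey]
    have h0 : ∑ i ∈ Finset.range t, (if t ≤ i then lam ^ i else 0) = 0 :=
      Finset.sum_eq_zero fun i hi => by
        have : ¬ t ≤ i := by have := Finset.mem_range.mp hi; omega
        simp [this]
    rw [h0, zero_add]
    calc ∑' n : ℕ, (if t ≤ n + t then lam ^ (n + t) else 0)
        = ∑' n : ℕ, lam ^ t * lam ^ n := by
          refine tsum_congr fun n => ?_
          rw [if_pos (Nat.le_add_left t n), pow_add]
          ring
      _ = lam ^ t * ∑' n : ℕ, lam ^ n := tsum_mul_left
      _ = lam ^ t * (1 - lam)⁻¹ := by rw [tsum_geometric_of_lt_one hl0 hl1]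
  have hcol : ∀ t : ℕ, ∑' n : ℕ, F (n, t) = w t := by
    intro t
    rw [hFdef]
    simp only
    rw [Summable.tsum_smul_const (((hφs t).mul_left _))]
    rw [tsum_mul_left, hφtsum t, hwdef]
    congr 1
    rw [mul_pow]
    field_simp
  -- exchange of summation
  have hswap : ∑' n : ℕ, u n = ∑' t : ℕ, w t := by
    calc ∑' n : ℕ, u n = ∑' n : ℕ, ∑' t : ℕ, F (n, t) :=
          tsum_congr fun n => (hrow n).symm
      _ = ∑' t : ℕ, ∑' n : ℕ, F (n, t) :=
          (Summable.tsum_comm (f := fun n t => F (n, t)) hFs).symm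
      _ = ∑' t : ℕ, w t := tsum_congr hcol
  refine ⟨?_, ?_, ?_⟩
  · rw [ha]; exact hu.add hv
  · rw [hb]; exact hw.add hv
  · rw [ha, hb, Summable.tsum_add hu hv, Summable.tsum_add hw hv, hswap]
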